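/- Let r ≥ 1 be an odd integer, ν ≥ 1 an integer, M = rν, N ≥ 0, x ∈ ℂ, and let e_0 < e_1 < … < e_{r−1} be integers with 0 ≤ e_0 and e_{r−1} < M such that N − e_j + iν ≡ 0 (mod 2) for all 0 ≤ i,j ≤ r−1. With equidistant starting points a_i = iν for 0 ≤ i ≤ r−1, one has det( q(rν, N, iν, e_j; x) )_{i,j=0}^{r−1} = i^{−(r+2)(r−1)/2} · (ν√r)^{−r} · det( Σ_{a=0}^{ν−1} exp( −2πi·e_j(i+ar)/(rν) ) · ( x·exp(−2πi(i+ar)/(rν)) + exp(2πi(i+ar)/(rν)) )^N )_{i,j=0}^{r−1}. -/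

import Mathlib

open Finset Complex Real

/-- The generating function `q(M,N,a,e;x)`. -/
noncomputable def qx (M N : ℕ) (a e : ℤ) (x : ℂ) : ℂ :=
  ∑ d ∈ Finset.range (N + 1),
    if (M : ℤ) ∣ (a + (N : ℤ) - 2 * (d : ℤ) - e) then (N.choose d : ℂ) * x ^ d else 0

/-- The generating function `q(M,N,a,e;x,y)`. -/
noncomputable def qxy (M N : ℕ) (a e : ℤ) (x y : ℂ) : ℂ :=
  ∑ d ∈ Finset.range (N + 1),
    if (M : ℤ) ∣ (a + (N : ℤ) - 2 * (d : ℤ) - e) then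
      (N.choose d : ℂ) * x ^ d * y ^ ((a + (N : ℤ) - 2 * (d : ℤ) - e) / (M : ℤ))
    else 0

lemma exp_filter (M : ℕ) (hM : 0 < M) (t : ℤ) :
    ∑ k ∈ Finset.range M, Complex.exp (2 * Real.pi * Complex.I * t * k / M) =
      if (M : ℤ) ∣ t then (M : ℂ) else 0 := by
  have hMC : (M : ℂ) ≠ 0 := Nat.cast_ne_zero.mpr hM.ne'
  have hz : ∀ k : ℕ, Complex.exp (2 * π * I * t * k / M) =
      Complex.exp (2 * π * I * t / M) ^ k := by
    intro k
    rw [← Complex.exp_nat_mul]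
    congr 1
    ring
  simp_rw [hz]
  by_cases h : (M : ℤ) ∣ t
  · obtain ⟨c, hc⟩ := h
    have h1 : Complex.exp (2 * π * I * t / M) = 1 := by
      have ht : (2 * π * I * t / M : ℂ) = c * (2 * π * I) := by
        have htc : (t : ℂ) = (M : ℂ) * (c : ℂ) := by exact_mod_cast congrArg (Int.cast : ℤ → ℂ) hc
        field_simp [htc]; exact htc
      rw [ht, Complex.exp_int_mul_two_pi_mul_I]
    rw [if_pos ⟨c, hc⟩]
    simp [h1]
  · rw [if_neg h]
    have h2 : (2 * π * I : ℂ) ≠ 0 := by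
      simp [Real.pi_ne_zero, Complex.I_ne_zero, Complex.ofReal_ne_zero]
    have hz1 : Complex.exp (2 * π * I * t / M) ≠ 1 := by
      intro hone
      rw [Complex.exp_eq_one_iff] at hone
      obtain ⟨n, hn⟩ := hone
      apply h
      refine ⟨n, ?_⟩
      have htc : (t : ℂ) = (M : ℂ) * n := by
        have h3 : 2 * π * I * t = n * (2 * π * I) * M := by
          field_simp at hn; linear_combination (2 * π * I) * hn
        have h4 : (2 * π * I : ℂ) * t = (2 * π * I) * ((M : ℂ) * n) := by
          linear_combination h3
        exact mul_left_cancel₀ h2 h4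
      exact_mod_cast htc
    rw [geom_sum_eq hz1]
    have hM1 : Complex.exp (2 * π * I * t / M) ^ M = 1 := by
      rw [← Complex.exp_nat_mul]
      have h5 : (M : ℂ) * (2 * π * I * t / M) = t * (2 * π * I) := by field_simp
      rw [h5, Complex.exp_int_mul_two_pi_mul_I]
    rw [hM1, sub_self, zero_div]

lemma qx_eq (M N : ℕ) (hM : 0 < M) (a e : ℤ) (x : ℂ) :
    qx M N a e x = (M : ℂ)⁻¹ * ∑ k ∈ Finset.range M,
      Complex.exp (2 * Real.pi * Complex.I * ((a : ℂ) - (e : ℂ)) * k / M) *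
        (x * Complex.exp (-(2 * Real.pi * Complex.I * k) / M) +
          Complex.exp (2 * Real.pi * Complex.I * k / M)) ^ N := by
  have hMC : (M : ℂ) ≠ 0 := Nat.cast_ne_zero.mpr hM.ne'
  have hstep : ∀ k ∈ Finset.range M,
      Complex.exp (2 * Real.pi * Complex.I * ((a : ℂ) - (e : ℂ)) * k / M) *
        (x * Complex.exp (-(2 * Real.pi * Complex.I * k) / M) +
          Complex.exp (2 * Real.pi * Complex.I * k / M)) ^ N
      = ∑ d ∈ Finset.range (N + 1), (N.choose d : ℂ) * x ^ d *
          Complex.exp (2 * Real.pi * Complex.I * ((a + (N : ℤ) - 2 * (d : ℤ) - e) : ℤ) * k / M) := by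
    intro k _
    rw [add_pow, Finset.mul_sum]
    refine Finset.sum_congr rfl fun d hd => ?_
    rw [Finset.mem_range] at hd
    have hdN : d ≤ N := by omega
    rw [mul_pow, ← Complex.exp_nat_mul, ← Complex.exp_nat_mul]
    rw [show ∀ u v w z : ℂ, u * (x ^ d * v * w * z) = (z * x ^ d) * (u * (v * w)) by intros; ring]
    congr 1
    rw [← Complex.exp_add, ← Complex.exp_add]
    congr 1
    have hcast : ((N - d : ℕ) : ℂ) = (N : ℂ) - (d : ℂ) := by
      push_cast [hdN]; ring
    push_cast
    rw [hcast]
    field_simp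
    ring
  rw [Finset.sum_congr rfl hstep, Finset.sum_comm]
  simp_rw [← Finset.mul_sum]
  rw [Finset.mul_sum, qx]
  refine Finset.sum_congr rfl fun d _ => ?_
  rw [exp_filter M hM]
  by_cases h : (M : ℤ) ∣ (a + (N : ℤ) - 2 * (d : ℤ) - e)
  · rw [if_pos h, if_pos h]
    field_simp
  · rw [if_neg h, if_neg h]
    simp

lemma sum_range_mul_eq (r ν : ℕ) (hr : 0 < r) (f : ℕ → ℂ) :
    ∑ k ∈ Finset.range (r * ν), f k
      = ∑ m ∈ Finset.range r, ∑ a ∈ Finset.range ν, f (m + a * r) := by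
  rw [← Finset.sum_product']
  refine Finset.sum_nbij' (fun k => (k % r, k / r)) (fun p => p.1 + p.2 * r) ?_ ?_ ?_ ?_ ?_
  · intro k hk
    rw [Finset.mem_range] at hk
    simp only [Finset.mem_product, Finset.mem_range]
    constructor
    · exact Nat.mod_lt _ hr
    · exact Nat.div_lt_of_lt_mul (by omega)
  · intro p hp
    simp only [Finset.mem_product, Finset.mem_range] at hp
    rw [Finset.mem_range]
    calc p.1 + p.2 * r < (1 + p.2) * r := by rw [add_mul, one_mul]; omega
    _ ≤ ν * r := Nat.mul_le_mul_right _ (by omega)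
    _ = r * ν := by ring
  · intro k _
    simp only []
    exact Nat.mod_add_div' k r
  · intro p hp
    simp only [Finset.mem_product, Finset.mem_range] at hp
    have h1 : (p.1 + p.2 * r) % r = p.1 := by
      rw [Nat.add_mul_mod_self_right, Nat.mod_eq_of_lt hp.1]
    have h2 : (p.1 + p.2 * r) / r = p.2 := by
      rw [Nat.add_mul_div_right _ _ hr, Nat.div_eq_of_lt hp.1, zero_add]
    simp [h1, h2]
  · intro k _
    congr 1
    exact (Nat.mod_add_div' k r).symm

lemma aux_gauss (r : ℕ) :
    2 * (∑ j ∈ Finset.range (r+1), ∑ i ∈ Finset.range j, (i + j)) = (r+1) * r^2 := by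
  induction r with
  | zero => simp
  | succ n ih =>
    rw [Finset.sum_range_succ, Nat.mul_add, ih]
    have h1 : ∑ i ∈ Finset.range (n+1), (i + (n+1))
        = (∑ i ∈ Finset.range (n+1), i) + (n+1)*(n+1) := by
      rw [Finset.sum_add_distrib, Finset.sum_const, Finset.card_range, smul_eq_mul]
    have h2 : (∑ i ∈ Finset.range (n+1), i) * 2 = (n+1) * n := by
      simpa using Finset.sum_range_id_mul_two (n+1)
    nlinarith [h1, h2]

lemma fin_pairs_to_nat {M : Type*} [AddCommMonoid M] (r : ℕ) (f : ℕ → ℕ → M) :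
    (∑ i : Fin r, ∑ j ∈ Finset.Ioi i, f (i : ℕ) (j : ℕ))
      = ∑ j ∈ Finset.range r, ∑ i ∈ Finset.range j, f i j := by
  have h1 : ∀ i : Fin r, (∑ j ∈ Finset.Ioi i, f (i : ℕ) (j : ℕ))
      = ∑ j ∈ Finset.Ioc (i : ℕ) (r - 1), f (i : ℕ) j := by
    intro i
    rw [show Finset.Ioc (i : ℕ) (r - 1) = Finset.Ioo (i : ℕ) r by
      ext y; simp only [Finset.mem_Ioc, Finset.mem_Ioo]; omega]
    rw [← Fin.map_valEmbedding_Ioi, Finset.sum_map]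
    rfl
  simp_rw [h1]
  rw [Fin.sum_univ_eq_sum_range (fun m => ∑ j ∈ Finset.Ioc m (r-1), f m j) r]
  have h2 : ∀ m ∈ Finset.range r, (∑ j ∈ Finset.Ioc m (r-1), f m j)
      = ∑ j ∈ Finset.Ico (m+1) r, f m j := by
    intro m hm
    rw [Finset.mem_range] at hm
    congr 1
    ext y
    simp only [Finset.mem_Ioc, Finset.mem_Ico]
    omega
  rw [Finset.sum_congr rfl h2]
  have h3 := Finset.sum_Ico_Ico_comm' 0 r f
  simp only [Finset.range_eq_Ico]
  convert h3 using 2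

noncomputable def Fm (r : ℕ) : Matrix (Fin r) (Fin r) ℂ :=
  Matrix.of fun i m : Fin r => Complex.exp (2 * Real.pi * Complex.I * (i : ℕ) * (m : ℕ) / r)

lemma detF_vdm (r : ℕ) (hr : 0 < r) :
    (Fm r).det = ∏ i : Fin r, ∏ j ∈ Finset.Ioi i,
      (Complex.exp (2 * Real.pi * Complex.I * (j : ℕ) / r)
        - Complex.exp (2 * Real.pi * Complex.I * (i : ℕ) / r)) := by
  have h : Fm r = Matrix.vandermonde (fun i : Fin r =>
      Complex.exp (2 * Real.pi * Complex.I * (i : ℕ) / r)) := by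
    ext i m
    simp only [Fm, Matrix.of_apply, Matrix.vandermonde_apply]
    rw [← Complex.exp_nat_mul]
    congr 1
    ring
  rw [h, Matrix.det_vandermonde]

lemma detF_phase (r : ℕ) (hr : 0 < r) (hodd : Odd r) :
    (Fm r).det = Complex.I ^ (r * (r - 1) / 2) *
      ((∏ i : Fin r, ∏ j ∈ Finset.Ioi i,
        (2 * Real.sin (Real.pi * (((j : ℕ) - (i : ℕ) : ℕ) : ℝ) / r) : ℝ) : ℝ) : ℂ) := by
  have hrC : (r : ℂ) ≠ 0 := Nat.cast_ne_zero.mpr hr.ne'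
  have hfac : ∀ i j : Fin r, j ∈ Finset.Ioi i →
      Complex.exp (2 * Real.pi * Complex.I * (j : ℕ) / r)
        - Complex.exp (2 * Real.pi * Complex.I * (i : ℕ) / r)
      = Complex.exp (Real.pi * Complex.I * (((i : ℕ) : ℂ) + ((j : ℕ) : ℂ)) / r) *
          (Complex.I * ((2 * Real.sin (Real.pi * (((j : ℕ) - (i : ℕ) : ℕ) : ℝ) / r) : ℝ) : ℂ)) := by
    intro i j hij
    rw [Finset.mem_Ioi] at hij
    have hijn : (i : ℕ) < (j : ℕ) := hij
    set θ : ℝ := Real.pi * (((j : ℕ) - (i : ℕ) : ℕ) : ℝ) / r with hθdef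
    have hθc : (θ : ℂ) = Real.pi * (((j : ℕ) : ℂ) - ((i : ℕ) : ℂ)) / r := by
      rw [hθdef]
      push_cast [Nat.cast_sub hijn.le]
      ring
    have hsin : Complex.I * ((2 * Real.sin θ : ℝ) : ℂ)
        = Complex.exp ((θ : ℂ) * Complex.I) - Complex.exp (-(θ : ℂ) * Complex.I) := by
      rw [Complex.exp_mul_I, Complex.exp_mul_I, Complex.cos_neg, Complex.sin_neg]
      push_cast
      ring
    rw [hsin, mul_sub, ← Complex.exp_add, ← Complex.exp_add]
    congr 1
    · rw [hθc]; field_simp; ring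
    · rw [hθc]; field_simp; ring
  set T : ℝ := ∏ i : Fin r, ∏ j ∈ Finset.Ioi i,
      (2 * Real.sin (Real.pi * (((j : ℕ) - (i : ℕ) : ℕ) : ℝ) / r)) with hTdef
  rw [detF_vdm r hr, Finset.prod_congr rfl (fun i _ => Finset.prod_congr rfl (hfac i))]
  simp_rw [Finset.prod_mul_distrib]
  have hsin : (∏ i : Fin r, ∏ j ∈ Finset.Ioi i,
      ((2 * Real.sin (Real.pi * (((j : ℕ) - (i : ℕ) : ℕ) : ℝ) / r) : ℝ) : ℂ)) = ((T : ℝ) : ℂ) := by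
    rw [hTdef, Complex.ofReal_prod]
    exact Finset.prod_congr rfl fun i _ => (Complex.ofReal_prod _ _).symm
  have hIK : (∏ i : Fin r, ∏ _j ∈ Finset.Ioi i, Complex.I) = Complex.I ^ (r * (r - 1) / 2) := by
    simp_rw [Finset.prod_const]
    rw [Finset.prod_pow_eq_pow_sum]
    congr 1
    simp_rw [Fin.card_Ioi]
    rw [Fin.sum_univ_eq_sum_range (fun m => r - 1 - m) r]
    rw [show (∑ m ∈ Finset.range r, (r - 1 - m)) = ∑ m ∈ Finset.range r, m from
      Finset.sum_range_reflect (fun m => m) r]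
    exact Finset.sum_range_id r
  obtain ⟨s, hs⟩ := hodd
  have hE : (∏ i : Fin r, ∏ j ∈ Finset.Ioi i,
      Complex.exp (Real.pi * Complex.I * (((i : ℕ) : ℂ) + ((j : ℕ) : ℂ)) / r)) = 1 := by
    simp_rw [← Complex.exp_sum]
    have hnat : (∑ i : Fin r, ∑ j ∈ Finset.Ioi i,
        (Real.pi * Complex.I * (((i : ℕ) : ℂ) + ((j : ℕ) : ℂ)) / r))
        = ((∑ j ∈ Finset.range r, ∑ i ∈ Finset.range j, (i + j) : ℕ) : ℂ) *
            (Real.pi * Complex.I / r) := by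
      push_cast
      have h0 := fin_pairs_to_nat r
        (fun a b : ℕ => (Real.pi : ℂ) * Complex.I * ((a : ℂ) + (b : ℂ)) / r)
      beta_reduce at h0
      rw [h0]
      simp_rw [Finset.sum_mul]
      exact Finset.sum_congr rfl fun j _ => Finset.sum_congr rfl fun i _ => by ring
    rw [hnat]
    have hSval : (∑ j ∈ Finset.range r, ∑ i ∈ Finset.range j, (i + j))
        = 2 * ((2 * s + 1) * s ^ 2) := by
      have hg := aux_gauss (2 * s)
      have h4 : (2 * s + 1) * (2 * s) ^ 2 = 4 * ((2 * s + 1) * s ^ 2) := by ring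
      rw [hs]
      omega
    rw [hSval]
    have harg : (((2 * ((2 * s + 1) * s ^ 2) : ℕ) : ℂ)) * ((Real.pi : ℂ) * Complex.I / r)
        = ((s ^ 2 : ℤ) : ℂ) * (2 * (Real.pi : ℂ) * Complex.I) := by
      rw [hs] at hrC ⊢
      push_cast at hrC ⊢
      field_simp
    rw [harg]
    exact Complex.exp_int_mul_two_pi_mul_I ((s : ℤ) ^ 2)
  rw [hE, hIK, hsin, one_mul]

lemma detF_val (r : ℕ) (hr : 0 < r) (hodd : Odd r) :
    (Fm r).det = ((Real.sqrt r : ℝ) : ℂ) ^ r * Complex.I ^ (r * (r - 1) / 2) := by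
  have hrR : (0:ℝ) < r := Nat.cast_pos.mpr hr
  have hphase := detF_phase r hr hodd
  set T : ℝ := ∏ i : Fin r, ∏ j ∈ Finset.Ioi i,
      (2 * Real.sin (Real.pi * (((j : ℕ) - (i : ℕ) : ℕ) : ℝ) / r)) with hTdef
  have hTpos : 0 < T := by
    rw [hTdef]
    refine Finset.prod_pos fun i _ => Finset.prod_pos fun j hij => ?_
    rw [Finset.mem_Ioi] at hij
    have hijn : (i : ℕ) < (j : ℕ) := hij
    have hd : (0:ℝ) < (((j : ℕ) - (i : ℕ) : ℕ) : ℝ) := Nat.cast_pos.mpr (by omega)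
    have h1 : (0:ℝ) < Real.pi * (((j : ℕ) - (i : ℕ) : ℕ) : ℝ) / r :=
      div_pos (mul_pos Real.pi_pos hd) hrR
    have h2 : Real.pi * (((j : ℕ) - (i : ℕ) : ℕ) : ℝ) / r < Real.pi := by
      rw [div_lt_iff₀ hrR]
      have hlt : (((j : ℕ) - (i : ℕ) : ℕ) : ℝ) < r := Nat.cast_lt.mpr (by omega)
      nlinarith [Real.pi_pos]
    exact mul_pos two_pos (Real.sin_pos_of_pos_of_lt_pi h1 h2)
  have hG : Fm r * (Fm r).conjTranspose = (r : ℂ) • 1 := by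
    ext i j
    rw [Matrix.mul_apply]
    have hterm : ∀ m : Fin r, Fm r i m * (Fm r).conjTranspose m j
        = Complex.exp (2 * Real.pi * Complex.I * ((((i:ℕ):ℤ) - ((j:ℕ):ℤ) : ℤ):ℂ) * ((m:ℕ):ℂ) / r) := by
      intro m
      simp only [Matrix.conjTranspose_apply, Fm, Matrix.of_apply, Complex.star_def]
      rw [← Complex.exp_conj, ← Complex.exp_add]
      congr 1
      simp only [map_div₀, map_mul, Complex.conj_I, Complex.conj_ofReal, map_ofNat, map_natCast]
      push_cast
      ring
    rw [Finset.sum_congr rfl (fun m _ => hterm m)]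
    rw [Fin.sum_univ_eq_sum_range (fun m : ℕ =>
      Complex.exp (2 * Real.pi * Complex.I * ((((i:ℕ):ℤ) - ((j:ℕ):ℤ) : ℤ):ℂ) * (m:ℂ) / r)) r]
    rw [exp_filter r hr (((i:ℕ):ℤ) - ((j:ℕ):ℤ))]
    by_cases hij : i = j
    · simp [hij, Matrix.smul_apply, Matrix.one_apply]
    · have hndvd : ¬ ((r:ℤ) ∣ (((i:ℕ):ℤ) - ((j:ℕ):ℤ))) := by
        intro hdvd
        obtain ⟨c, hc⟩ := hdvd
        have hi := i.isLt
        have hj := j.isLt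
        have hij' : (i:ℕ) ≠ (j:ℕ) := fun h => hij (Fin.ext h)
        rcases lt_trichotomy c 0 with h | h | h
        · have : (c : ℤ) ≤ -1 := by omega
          have : ((i:ℕ):ℤ) - ((j:ℕ):ℤ) ≤ -(r:ℤ) := by
            rw [hc]; nlinarith [Int.natCast_pos.mpr hr]
          omega
        · subst h; simp at hc; omega
        · have : (1 : ℤ) ≤ c := h
          have : (r:ℤ) ≤ ((i:ℕ):ℤ) - ((j:ℕ):ℤ) := by
            rw [hc]; nlinarith [Int.natCast_pos.mpr hr]
          omega
      rw [if_neg hndvd]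
      have : ((r : ℂ) • (1 : Matrix (Fin r) (Fin r) ℂ)) i j = 0 := by
        simp [Matrix.smul_apply, Matrix.one_apply, hij]
      rw [this]
  have hdetG := congrArg Matrix.det hG
  rw [Matrix.det_mul, Matrix.det_conjTranspose, Complex.star_def, Matrix.det_smul,
    Matrix.det_one, mul_one] at hdetG
  simp only [Fintype.card_fin] at hdetG
  rw [Complex.mul_conj] at hdetG
  have h1 : Complex.normSq ((Fm r).det) = (r:ℝ)^r := by exact_mod_cast hdetG
  rw [hphase, map_mul, map_pow, Complex.normSq_I, one_pow, one_mul,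
    Complex.normSq_ofReal] at h1
  have hnn : (0:ℝ) ≤ Real.sqrt r ^ r := by positivity
  have h2 : (Real.sqrt r ^ r) * (Real.sqrt r ^ r) = (r:ℝ)^r := by
    rw [← mul_pow, Real.mul_self_sqrt (Nat.cast_nonneg r)]
  have hTval : T = Real.sqrt r ^ r := by
    rw [← Real.sqrt_mul_self hTpos.le, h1, ← h2, Real.sqrt_mul_self hnn]
  rw [hphase, hTval]
  push_cast
  ring

lemma factorA (r ν : ℕ) (hr : 1 ≤ r) (hν : 1 ≤ ν) (N : ℕ) (x : ℂ) (e : Fin r → ℤ) :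
    (Matrix.of fun i j : Fin r => qx (r * ν) N ((i : ℕ) * ν) (e j) x)
    = ((Matrix.of fun i m : Fin r =>
          ((r * ν : ℕ) : ℂ)⁻¹ * Complex.exp (2 * Real.pi * Complex.I * (i : ℕ) * (m : ℕ) / r)) *
       (Matrix.of fun i j : Fin r =>
            ∑ a ∈ Finset.range ν,
              Complex.exp (-2 * Real.pi * Complex.I *
                  (e j : ℂ) * (((i : ℕ) : ℂ) + (a : ℂ) * r) / ((r : ℂ) * ν)) *
                (x * Complex.exp (-2 * Real.pi * Complex.I *
                      (((i : ℕ) : ℂ) + (a : ℂ) * r) / ((r : ℂ) * ν)) +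
                  Complex.exp (2 * Real.pi * Complex.I *
                      (((i : ℕ) : ℂ) + (a : ℂ) * r) / ((r : ℂ) * ν))) ^ N)) := by
  have hrν : 0 < r * ν := by positivity
  have hrC : (r : ℂ) ≠ 0 := Nat.cast_ne_zero.mpr (by omega)
  have hνC : (ν : ℂ) ≠ 0 := Nat.cast_ne_zero.mpr (by omega)
  ext i j
  rw [Matrix.mul_apply]
  simp only [Matrix.of_apply]
  rw [qx_eq _ _ hrν, sum_range_mul_eq r ν (by omega), Finset.mul_sum,
    Fin.sum_univ_eq_sum_range (fun m : ℕ =>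
      ((r * ν : ℕ):ℂ)⁻¹ * Complex.exp (2 * (π:ℂ) * I * ((i:ℕ):ℂ) * (m:ℂ) / (r:ℂ)) *
        ∑ a ∈ Finset.range ν,
          Complex.exp (-2 * (π:ℂ) * I * ((e j : ℤ):ℂ) * ((m:ℂ) + (a:ℂ) * (r:ℂ)) / ((r:ℂ) * (ν:ℂ))) *
            (x * Complex.exp (-2 * (π:ℂ) * I * ((m:ℂ) + (a:ℂ) * (r:ℂ)) / ((r:ℂ) * (ν:ℂ))) +
              Complex.exp (2 * (π:ℂ) * I * ((m:ℂ) + (a:ℂ) * (r:ℂ)) / ((r:ℂ) * (ν:ℂ)))) ^ N) r]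
  refine Finset.sum_congr rfl fun m hm => ?_
  rw [Finset.mem_range] at hm
  rw [mul_assoc, Finset.mul_sum, Finset.mul_sum]
  refine Finset.sum_congr rfl fun a ha => ?_
  have hbase1 : (-(2 * (π:ℂ) * I * ((m + a * r : ℕ):ℂ)) / ((r * ν : ℕ):ℂ))
      = -2 * (π:ℂ) * I * ((m:ℂ) + (a:ℂ) * (r:ℂ)) / ((r:ℂ) * (ν:ℂ)) := by
    push_cast; ring
  have hbase2 : (2 * (π:ℂ) * I * ((m + a * r : ℕ):ℂ) / ((r * ν : ℕ):ℂ))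
      = 2 * (π:ℂ) * I * ((m:ℂ) + (a:ℂ) * (r:ℂ)) / ((r:ℂ) * (ν:ℂ)) := by
    push_cast; ring
  rw [hbase1, hbase2]
  have gen : ∀ (c P A B C : ℂ), Complex.exp C = Complex.exp A * Complex.exp B →
      c * (Complex.exp C * P) = c * Complex.exp A * (Complex.exp B * P) := by
    intro c P A B C h; rw [h]; ring
  refine gen _ _ _ _ _ ?_
  rw [← Complex.exp_add, Complex.exp_eq_exp_iff_exists_int]
  refine ⟨(i:ℕ) * a, ?_⟩
  push_cast
  field_simp
  ring

/-- equidistant starting points `a i = i·ν`, `M = r·ν`, `r` odd: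
`det (q(rν,N,iν,e j;x)) = i^(-(r+2)(r-1)/2) (ν√r)^(-r) det(…)`. -/
theorem stmt14 (r ν : ℕ) (hr : 1 ≤ r) (hrodd : Odd r) (hν : 1 ≤ ν) (N : ℕ) (x : ℂ)
    (e : Fin r → ℤ) (hemono : StrictMono e)
    (he0 : 0 ≤ e ⟨0, by omega⟩) (heM : e ⟨r - 1, by omega⟩ < (r : ℤ) * ν)
    (hpar : ∀ i j : Fin r, (2 : ℤ) ∣ ((N : ℤ) - e j + (i : ℕ) * ν)) :
    Matrix.det (Matrix.of fun i j : Fin r =>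
        qx (r * ν) N ((i : ℕ) * ν) (e j) x)
      = Complex.I ^ (-((((r + 2) * (r - 1)) / 2 : ℕ) : ℤ)) *
          ((ν : ℂ) * (Real.sqrt r : ℂ)) ^ (-(r : ℤ)) *
          Matrix.det (Matrix.of fun i j : Fin r =>
            ∑ a ∈ Finset.range ν,
              Complex.exp (-2 * Real.pi * Complex.I *
                  (e j : ℂ) * (((i : ℕ) : ℂ) + (a : ℂ) * r) / ((r : ℂ) * ν)) *
                (x * Complex.exp (-2 * Real.pi * Complex.I *
                      (((i : ℕ) : ℂ) + (a : ℂ) * r) / ((r : ℂ) * ν)) +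
                  Complex.exp (2 * Real.pi * Complex.I *
                      (((i : ℕ) : ℂ) + (a : ℂ) * r) / ((r : ℂ) * ν))) ^ N) := by
  have hr0 : 0 < r := hr
  have hν0 : 0 < ν := hν
  rw [factorA r ν hr hν N x e, Matrix.det_mul]
  have hC : (Matrix.of fun i m : Fin r =>
        ((r * ν : ℕ) : ℂ)⁻¹ * Complex.exp (2 * Real.pi * Complex.I * (i : ℕ) * (m : ℕ) / r))
      = ((r * ν : ℕ) : ℂ)⁻¹ • Fm r := by
    ext i m
    simp [Fm, Matrix.smul_apply]
  rw [hC, Matrix.det_smul, detF_val r hr0 hrodd, Fintype.card_fin]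
  obtain ⟨s, hs⟩ := hrodd
  have hK : r * (r - 1) / 2 = 2 * s ^ 2 + s := by
    have h1 : r * (r - 1) = 2 * (2 * s ^ 2 + s) := by
      rw [hs]
      rw [show 2 * s + 1 - 1 = 2 * s from rfl]
      ring
    omega
  have hm : (r + 2) * (r - 1) / 2 = 2 * s ^ 2 + 3 * s := by
    have h1 : (r + 2) * (r - 1) = 2 * (2 * s ^ 2 + 3 * s) := by
      rw [hs]
      rw [show 2 * s + 1 - 1 = 2 * s from rfl]
      ring
    omega
  have hIeq : Complex.I ^ (-((((r + 2) * (r - 1)) / 2 : ℕ) : ℤ))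
      = Complex.I ^ (r * (r - 1) / 2) := by
    rw [hK, hm]
    have h14 : Complex.I ^ (2 * s ^ 2 + s) * Complex.I ^ (2 * s ^ 2 + 3 * s) = 1 := by
      rw [← pow_add, show (2 * s ^ 2 + s) + (2 * s ^ 2 + 3 * s) = 4 * (s ^ 2 + s) from by ring,
        pow_mul, Complex.I_pow_four, one_pow]
    rw [zpow_neg, zpow_natCast]
    exact inv_eq_of_mul_eq_one_left h14
  have hrR0 : (0:ℝ) ≤ (r:ℝ) := Nat.cast_nonneg r
  have hsq : ((Real.sqrt r : ℝ) : ℂ) * ((Real.sqrt r : ℝ) : ℂ) = (r : ℂ) := by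
    rw [← Complex.ofReal_mul, Real.mul_self_sqrt hrR0]
    norm_cast
  have hrC : (r : ℂ) ≠ 0 := Nat.cast_ne_zero.mpr hr0.ne'
  have hνC : (ν : ℂ) ≠ 0 := Nat.cast_ne_zero.mpr hν0.ne'
  have hsqrtC : ((Real.sqrt r : ℝ) : ℂ) ≠ 0 := by
    intro h
    rw [h, zero_mul] at hsq
    exact hrC hsq.symm
  have hpow : (((r * ν : ℕ) : ℂ)⁻¹) ^ r * ((Real.sqrt r : ℝ) : ℂ) ^ r
      = ((ν : ℂ) * ((Real.sqrt r : ℝ) : ℂ)) ^ (-(r : ℤ)) := by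
    rw [zpow_neg, zpow_natCast]
    refine (inv_eq_of_mul_eq_one_left ?_).symm
    rw [← mul_pow, ← mul_pow]
    have hinner : ((r * ν : ℕ) : ℂ)⁻¹ * ((Real.sqrt r : ℝ) : ℂ) *
        ((ν : ℂ) * ((Real.sqrt r : ℝ) : ℂ)) = 1 := by
      have hexp : ((r * ν : ℕ) : ℂ)⁻¹ * ((Real.sqrt r : ℝ) : ℂ) *
          ((ν : ℂ) * ((Real.sqrt r : ℝ) : ℂ))
          = (((Real.sqrt r : ℝ) : ℂ) * ((Real.sqrt r : ℝ) : ℂ)) * (ν : ℂ) *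
            ((r : ℂ) * (ν : ℂ))⁻¹ := by
        push_cast
        ring
      rw [hexp, hsq]
      field_simp
    rw [mul_comm (((r * ν : ℕ) : ℂ)⁻¹) _, mul_comm _ (((Real.sqrt r : ℝ) : ℂ))] at hinner ⊢
    rw [show ((Real.sqrt r : ℝ) : ℂ) * ((r * ν : ℕ) : ℂ)⁻¹ * (((Real.sqrt r : ℝ) : ℂ) * (ν : ℂ))
        = 1 from by linear_combination hinner]
    exact one_pow r
  calc (((r * ν : ℕ) : ℂ)⁻¹) ^ r * (((Real.sqrt r : ℝ) : ℂ) ^ r * Complex.I ^ (r * (r - 1) / 2)) *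
        Matrix.det _
      = ((((r * ν : ℕ) : ℂ)⁻¹) ^ r * ((Real.sqrt r : ℝ) : ℂ) ^ r) * Complex.I ^ (r * (r - 1) / 2) *
        Matrix.det _ := by ring
    _ = _ := by
        rw [hpow, hIeq]
        ring
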